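/- For every n ≥ 3, the number of acyclic orientations of the wheel graph W_n is at least the number of spanning trees of W_n. -/

import Mathlib

/-- The wheel graph `W_n` on vertex set `{0, 1, …, n}`: the hub `0` is adjacent to every
rim vertex `1, …, n`, and two rim vertices are adjacent iff their labels are consecutive
modulo `n`. -/
def wheelGraph (n : ℕ) : SimpleGraph (Fin (n + 1)) :=
  SimpleGraph.fromRel (fun i j => i = 0 ∨ ((i.val : ZMod n) = (j.val : ZMod n) + 1))

/-- The set of spanning trees of a graph `G`, regarded as edge sets. -/
def spanningTreeSet {V : Type*} (G : SimpleGraph V) : Set (Set (Sym2 V)) :=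
  {F | F ⊆ G.edgeSet ∧ (SimpleGraph.fromEdgeSet F).IsTree}

/-- The set of acyclic orientations of a graph `G`: relations orienting each edge of `G`
in exactly one direction, whose transitive closure is irreflexive. -/
def acyclicOrientationSet {V : Type*} (G : SimpleGraph V) : Set (V → V → Prop) :=
  {o | (∀ a b, o a b → G.Adj a b) ∧ (∀ a b, G.Adj a b → (o a b ↔ ¬ o b a)) ∧
    (∀ a, ¬ Relation.TransGen o a a)}

set_option linter.unusedVariables false
set_option linter.unusedSectionVars false

namespace WheelAux

variable {n : ℕ} [NeZero n]

/-- The rim vertex at position `j`. -/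
def rv (j : ZMod n) : Fin (n + 1) := ⟨j.val + 1, by have := ZMod.val_lt j; omega⟩

lemma rv_ne_zero (j : ZMod n) : rv j ≠ 0 := by
  simp [rv, Fin.ext_iff]

lemma rv_injective : Function.Injective (rv (n := n)) := by
  intro a b h
  exact ZMod.val_injective n (by simpa [rv, Fin.ext_iff] using h)

lemma cast_rv_val (j : ZMod n) : (((rv j : Fin (n+1)).val : ℕ) : ZMod n) = j + 1 := by
  show ((j.val + 1 : ℕ) : ZMod n) = j + 1
  push_cast [ZMod.natCast_zmod_val]
  ring

lemma exists_rv (v : Fin (n + 1)) (hv : v ≠ 0) : ∃ j : ZMod n, v = rv j := by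
  refine ⟨((v.val - 1 : ℕ) : ZMod n), ?_⟩
  have h1 : 1 ≤ v.val := by
    rcases Nat.eq_zero_or_pos v.val with h | h
    · exact absurd (Fin.ext h) hv
    · exact h
  have h2 : v.val - 1 < n := by have := v.isLt; omega
  have : ((v.val - 1 : ℕ) : ZMod n).val = v.val - 1 := ZMod.val_cast_of_lt h2
  simp [rv, Fin.ext_iff, this]
  omega

omit [NeZero n] in
lemma one_lt_cases (hn : 3 ≤ n) : (1 : ZMod n) ≠ 0 := by
  haveI : Fact (1 < n) := ⟨by omega⟩
  exact one_ne_zero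

lemma adj_hub (j : ZMod n) : (wheelGraph n).Adj 0 (rv j) := by
  rw [wheelGraph, SimpleGraph.fromRel_adj]
  exact ⟨fun h => rv_ne_zero j h.symm, Or.inl (Or.inl rfl)⟩

lemma adj_rim (hn : 3 ≤ n) (j : ZMod n) : (wheelGraph n).Adj (rv j) (rv (j + 1)) := by
  rw [wheelGraph, SimpleGraph.fromRel_adj]
  constructor
  · intro h
    have h2 := rv_injective h
    exact one_lt_cases hn (by linear_combination -h2)
  · right
    right
    rw [cast_rv_val, cast_rv_val]

lemma adj_char (hn : 3 ≤ n) {a b : Fin (n + 1)} (h : (wheelGraph n).Adj a b) :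
    a = 0 ∨ b = 0 ∨ ∃ j : ZMod n, (a = rv j ∧ b = rv (j + 1)) ∨ (b = rv j ∧ a = rv (j + 1)) := by
  rw [wheelGraph, SimpleGraph.fromRel_adj] at h
  obtain ⟨hne, h | h⟩ := h
  · rcases h with h | h
    · exact Or.inl h
    · by_cases ha : a = 0
      · exact Or.inl ha
      by_cases hb : b = 0
      · exact Or.inr (Or.inl hb)
      obtain ⟨p, hp⟩ := exists_rv a ha
      obtain ⟨q, hq⟩ := exists_rv b hb
      subst hp hq
      rw [cast_rv_val, cast_rv_val] at h
      refine Or.inr (Or.inr ⟨q, Or.inr ⟨rfl, ?_⟩⟩)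
      congr 1
      linear_combination h
  · rcases h with h | h
    · exact Or.inr (Or.inl h)
    · by_cases ha : a = 0
      · exact Or.inl ha
      by_cases hb : b = 0
      · exact Or.inr (Or.inl hb)
      obtain ⟨p, hp⟩ := exists_rv a ha
      obtain ⟨q, hq⟩ := exists_rv b hb
      subst hp hq
      rw [cast_rv_val, cast_rv_val] at h
      refine Or.inr (Or.inr ⟨p, Or.inl ⟨rfl, ?_⟩⟩)
      congr 1
      linear_combination h

lemma edge_char (hn : 3 ≤ n) {e : Sym2 (Fin (n + 1))} (he : e ∈ (wheelGraph n).edgeSet) :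
    (∃ j : ZMod n, e = s(0, rv j)) ∨ (∃ j : ZMod n, e = s(rv j, rv (j + 1))) := by
  induction e with
  | h a b =>
    rw [SimpleGraph.mem_edgeSet] at he
    rcases adj_char hn he with h | h | ⟨j, ⟨h1, h2⟩ | ⟨h1, h2⟩⟩
    · subst h
      obtain ⟨q, hq⟩ := exists_rv b (fun hb => (by subst hb; exact he.ne rfl : False))
      exact Or.inl ⟨q, by rw [hq]⟩
    · subst h
      obtain ⟨q, hq⟩ := exists_rv a (fun ha => (by subst ha; exact he.ne rfl : False))
      exact Or.inl ⟨q, by rw [hq, Sym2.eq_swap]⟩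
    · exact Or.inr ⟨j, by rw [h1, h2]⟩
    · exact Or.inr ⟨j, by rw [h1, h2, Sym2.eq_swap]⟩

lemma exists_transition (f : ZMod n → Bool) (h1 : ∃ a, f a = true) (h0 : ∃ b, f b = false) :
    ∃ j : ZMod n, f j = true ∧ f (j + 1) = false := by
  by_contra hc
  push_neg at hc
  obtain ⟨a, ha⟩ := h1
  obtain ⟨b, hb⟩ := h0
  have key : ∀ k : ℕ, f (a + k) = true := by
    intro k
    induction k with
    | zero => simpa using ha
    | succ m ih =>
      have := hc (a + m) ih
      rw [Bool.ne_false_iff] at this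
      rw [show a + ((m : ℕ) + 1 : ℕ) = a + m + 1 by push_cast; ring]
      exact this
  have : f b = true := by
    have hb' : a + ((b - a).val : ℕ) = b := by
      rw [ZMod.natCast_zmod_val]; ring
    rw [← hb']
    exact key _
  rw [this] at hb
  exact absurd hb (by simp)

lemma realize (hn : 3 ≤ n) (δ : ZMod n → Bool) (h1 : ∃ a, δ a = true) (h0 : ∃ b, δ b = false) :
    ∃ x : ZMod n → ℤ, (∀ j, |x j| ≤ 3 * n) ∧
      ∀ j, (δ j = true → x j < x (j + 1)) ∧ (δ j = false → x (j + 1) < x j) := by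
  obtain ⟨j1, hj1t, hj1f⟩ := exists_transition δ h1 h0
  set j0 : ZMod n := j1 + 1 with hj0
  have hδ0 : δ j0 = false := hj1f
  have hδprev : δ (j0 - 1) = true := by
    rw [show j0 - 1 = j1 by rw [hj0]; ring]
    exact hj1t
  set step : ℕ → ℤ := fun t =>
    if δ (j0 + 1 + (t : ℕ)) = true then (if t = n - 2 then 2 * n else 1) else -1 with hstep
  set y : ℕ → ℤ := fun t => ∑ i ∈ Finset.range t, step i with hy
  have hysucc : ∀ t, y (t + 1) = y t + step t := by
    intro t; rw [hy]; exact Finset.sum_range_succ _ _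
  have claim1 : ∀ t, t ≤ n - 2 → |y t| ≤ (t : ℤ) := by
    intro t
    induction t with
    | zero => intro _; simp [hy]
    | succ m ih =>
      intro hm
      have hm' : m ≤ n - 2 := by omega
      have hne : m ≠ n - 2 := by omega
      have hs : |step m| ≤ 1 := by
        rw [hstep]
        by_cases h : δ (j0 + 1 + (m : ℕ)) = true <;> simp [h, hne]
      calc |y (m + 1)| = |y m + step m| := by rw [hysucc]
        _ ≤ |y m| + |step m| := abs_add_le _ _
        _ ≤ (m : ℤ) + 1 := by have := ih hm'; omega
        _ = ((m + 1 : ℕ) : ℤ) := by push_cast; ring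
  have hsteplast : step (n - 2) = 2 * n := by
    rw [hstep]
    have harg : j0 + 1 + ((n - 2 : ℕ) : ZMod n) = j0 - 1 := by
      have : ((n - 2 : ℕ) : ZMod n) = -2 := by
        push_cast [Nat.cast_sub (by omega : 2 ≤ n)]
        simp [ZMod.natCast_self]
      rw [this]; ring
    simp only [harg, hδprev, if_true]
  have hylast : y (n - 1) ≥ (n : ℤ) + 2 := by
    have : y (n - 1) = y (n - 2) + step (n - 2) := by
      rw [show n - 1 = (n - 2) + 1 by omega, hysucc]
    have h2 := claim1 (n - 2) le_rfl
    rw [abs_le] at h2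
    rw [this, hsteplast]
    have : ((n - 2 : ℕ) : ℤ) ≤ (n : ℤ) - 2 := by push_cast [Nat.cast_sub (by omega : 2 ≤ n)]; omega
    omega
  have hybound : ∀ t, t ≤ n - 1 → |y t| ≤ 3 * n := by
    intro t ht
    by_cases h : t ≤ n - 2
    · have := claim1 t h
      have : (t : ℤ) ≤ (n : ℤ) := by exact_mod_cast Nat.le_of_lt_succ (by omega)
      omega
    · have ht' : t = n - 1 := by omega
      subst ht'
      have : y (n - 1) = y (n - 2) + step (n - 2) := by
        rw [show n - 1 = (n - 2) + 1 by omega, hysucc]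
      have h2 := claim1 (n - 2) le_rfl
      rw [this, hsteplast]
      have : ((n - 2 : ℕ) : ℤ) ≤ (n : ℤ) - 2 := by push_cast [Nat.cast_sub (by omega : 2 ≤ n)]; omega
      have hn' : (3 : ℤ) ≤ (n : ℤ) := by exact_mod_cast hn
      rw [abs_le] at h2 ⊢
      omega
  refine ⟨fun j => y ((j - (j0 + 1)).val), ?_, ?_⟩
  · intro j
    exact hybound _ (by have := ZMod.val_lt (j - (j0 + 1)); omega)
  · intro j
    set t := (j - (j0 + 1)).val with hT
    have hjt : j = j0 + 1 + (t : ℕ) := by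
      have : ((t : ℕ) : ZMod n) = j - (j0 + 1) := ZMod.natCast_zmod_val _
      rw [this]; ring
    have htlt : t < n := ZMod.val_lt _
    by_cases hcase : t < n - 1
    · have hval1 : ((j + 1) - (j0 + 1)).val = t + 1 := by
        have : (j + 1) - (j0 + 1) = ((t + 1 : ℕ) : ZMod n) := by
          rw [hjt]; push_cast; ring
        rw [this, ZMod.val_cast_of_lt (by omega)]
      have hx1 : y (((j + 1) - (j0 + 1)).val) = y t + step t := by rw [hval1, hysucc]
      have hδj : δ j = δ (j0 + 1 + (t : ℕ)) := by rw [← hjt]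
      constructor
      · intro hδ
        beta_reduce
        rw [hx1, ← hT]
        have : step t ≥ 1 := by
          rw [hstep]
          simp only [← hδj, hδ, if_true]
          by_cases h : t = n - 2 <;> simp [h] <;> omega
        omega
      · intro hδ
        beta_reduce
        rw [hx1, ← hT]
        have : step t = -1 := by
          rw [hstep]
          simp only [← hδj, hδ]
          simp
        omega
    · have ht' : t = n - 1 := by omega
      have hjj0 : j = j0 := by
        rw [hjt, ht']
        have : ((n - 1 : ℕ) : ZMod n) = -1 := by
          push_cast [Nat.cast_sub (by omega : 1 ≤ n)]
          simp [ZMod.natCast_self]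
        rw [this]; ring
      have hδj : δ j = false := by rw [hjj0]; exact hδ0
      constructor
      · intro h; rw [h] at hδj; exact absurd hδj (by simp)
      · intro _
        beta_reduce
        have hval0 : ((j + 1) - (j0 + 1)).val = 0 := by
          rw [hjj0]; simp
        rw [hval0, ← hT, ht']
        have : y 0 = 0 := by simp [hy]
        rw [this]
        omega

section TreeSide

variable (F : Set (Sym2 (Fin (n + 1))))

def sP (j : ZMod n) : Prop := s((0 : Fin (n+1)), rv j) ∈ F
def rP (j : ZMod n) : Prop := s(rv j, rv (j + 1)) ∈ F
def σP (j : ZMod n) : Prop :=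
  ∃ k : ℕ, k < n ∧ (∀ m : ℕ, m < k → rP F (j + (m : ZMod n))) ∧ sP F (j + (k : ZMod n))

variable {F}

lemma rv_ne_succ (hn : 3 ≤ n) (j : ZMod n) : rv j ≠ rv (j + 1) := by
  intro h
  exact one_lt_cases hn (by linear_combination - rv_injective h)

lemma chain_exists (hn : 3 ≤ n) (k : ℕ) :
    ∀ j : ZMod n, (∀ m : ℕ, m < k → rP F (j + (m : ZMod n))) →
    ∃ p : (SimpleGraph.fromEdgeSet F).Walk (rv j) (rv (j + (k : ZMod n))),
      p.support = (List.range (k + 1)).map (fun m : ℕ => rv (j + (m : ZMod n)))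
        ∧ p.length = k := by
  induction k with
  | zero =>
    intro j _
    have h0 : rv j = rv (j + ((0 : ℕ) : ZMod n)) := by norm_num
    refine ⟨SimpleGraph.Walk.nil.copy rfl h0, ?_, ?_⟩
    · rw [SimpleGraph.Walk.support_copy]
      simp [show List.range 1 = [0] from rfl, ← h0]
    · simp
  | succ k ih =>
    intro j hc
    have hadj : (SimpleGraph.fromEdgeSet F).Adj (rv j) (rv (j + 1)) := by
      rw [SimpleGraph.fromEdgeSet_adj]
      exact ⟨by simpa [rP] using hc 0 (by omega), rv_ne_succ hn j⟩
    obtain ⟨p', hsupp, hlen⟩ := ih (j + 1) (by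
      intro m hm
      have := hc (m + 1) (by omega)
      rw [show j + ((m + 1 : ℕ) : ZMod n) = j + 1 + (m : ZMod n) by push_cast; ring] at this
      exact this)
    have hend : rv (j + 1 + (k : ZMod n)) = rv (j + ((k + 1 : ℕ) : ZMod n)) := by
      congr 1; push_cast; ring
    refine ⟨(SimpleGraph.Walk.cons hadj p').copy rfl hend, ?_, ?_⟩
    · rw [SimpleGraph.Walk.support_copy, SimpleGraph.Walk.support_cons, hsupp]
      conv_rhs => rw [List.range_succ_eq_map, List.map_cons, List.map_map]
      congr 1
      · norm_num
      apply List.map_congr_left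
      intro m _
      show rv (j + 1 + (m : ZMod n)) = rv (j + ((m + 1 : ℕ) : ZMod n))
      congr 1; push_cast; ring
    · simp [hlen]

lemma chain_nodup (hn : 3 ≤ n) {k : ℕ} (hk : k < n) (j : ZMod n) :
    ((List.range (k + 1)).map (fun m : ℕ => rv (j + (m : ZMod n)))).Nodup := by
  apply List.Nodup.map_on _ List.nodup_range
  intro a ha b hb hab
  rw [List.mem_range] at ha hb
  have h1 := rv_injective hab
  have h2 : ((a : ℕ) : ZMod n) = ((b : ℕ) : ZMod n) := by linear_combination h1
  have h3 := congrArg ZMod.val h2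
  rwa [ZMod.val_cast_of_lt (by omega), ZMod.val_cast_of_lt (by omega)] at h3

lemma no_two_spokes (hn : 3 ≤ n) (ht : (SimpleGraph.fromEdgeSet F).IsTree) (j : ZMod n)
    (k : ℕ) (hk1 : 1 ≤ k) (hkn : k < n)
    (hchain : ∀ m : ℕ, m < k → rP F (j + (m : ZMod n)))
    (hs1 : sP F j) (hs2 : sP F (j + (k : ZMod n))) : False := by
  obtain ⟨p, hsupp, hlen⟩ := chain_exists hn k j hchain
  have hadj1 : (SimpleGraph.fromEdgeSet F).Adj 0 (rv j) := by
    rw [SimpleGraph.fromEdgeSet_adj]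
    exact ⟨hs1, fun h => rv_ne_zero j h.symm⟩
  have hadj2 : (SimpleGraph.fromEdgeSet F).Adj 0 (rv (j + (k : ZMod n))) := by
    rw [SimpleGraph.fromEdgeSet_adj]
    exact ⟨hs2, fun h => rv_ne_zero _ h.symm⟩
  set P1 : (SimpleGraph.fromEdgeSet F).Walk 0 (rv (j + (k : ZMod n))) :=
    SimpleGraph.Walk.cons hadj2 SimpleGraph.Walk.nil with hP1
  set P2 : (SimpleGraph.fromEdgeSet F).Walk 0 (rv (j + (k : ZMod n))) :=
    SimpleGraph.Walk.cons hadj1 p with hP2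
  have hpath1 : P1.IsPath := by
    rw [SimpleGraph.Walk.isPath_def, hP1, SimpleGraph.Walk.support_cons]
    simp only [SimpleGraph.Walk.support_nil, List.nodup_cons, List.mem_singleton,
      List.nodup_singleton, and_true]
    refine ⟨fun h => rv_ne_zero _ h.symm, by simp, List.nodup_nil⟩
  have hpath2 : P2.IsPath := by
    rw [SimpleGraph.Walk.isPath_def, hP2, SimpleGraph.Walk.support_cons, hsupp,
      List.nodup_cons]
    constructor
    · intro hmem
      obtain ⟨m, _, hm⟩ := List.mem_map.mp hmem
      exact rv_ne_zero _ hm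
    · exact chain_nodup hn hkn j
  obtain ⟨q, -, huniq⟩ := (SimpleGraph.isTree_iff_existsUnique_path.mp ht).2 0
    (rv (j + (k : ZMod n)))
  have heq : P1 = P2 := (huniq P1 hpath1).trans (huniq P2 hpath2).symm
  have := congrArg SimpleGraph.Walk.length heq
  rw [hP1, hP2] at this
  simp [hlen] at this
  omega

lemma not_all_rim (hn : 3 ≤ n) (ht : (SimpleGraph.fromEdgeSet F).IsTree) :
    ¬ ∀ j : ZMod n, rP F j := by
  intro hall
  obtain ⟨p, hsupp, hlen⟩ :=
    chain_exists (F := F) hn (n - 1) 1 (fun m _ => hall _)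
  have hstart : rv (1 : ZMod n) = rv ((0 : ZMod n) + 1) := by congr 1; ring
  have hend : rv ((1 : ZMod n) + ((n - 1 : ℕ) : ZMod n)) = rv (0 : ZMod n) := by
    congr 1
    push_cast [Nat.cast_sub (by omega : 1 ≤ n)]
    simp [ZMod.natCast_self]
  set P2 : (SimpleGraph.fromEdgeSet F).Walk (rv ((0:ZMod n) + 1)) (rv (0 : ZMod n)) :=
    p.copy hstart hend with hP2
  have hadj : (SimpleGraph.fromEdgeSet F).Adj (rv (0 : ZMod n)) (rv ((0:ZMod n) + 1)) := by
    rw [SimpleGraph.fromEdgeSet_adj]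
    exact ⟨hall 0, rv_ne_succ hn 0⟩
  set P1 : (SimpleGraph.fromEdgeSet F).Walk (rv ((0:ZMod n) + 1)) (rv (0 : ZMod n)) :=
    SimpleGraph.Walk.cons hadj.symm SimpleGraph.Walk.nil with hP1
  have hpath1 : P1.IsPath := by
    rw [SimpleGraph.Walk.isPath_def, hP1, SimpleGraph.Walk.support_cons]
    simp only [SimpleGraph.Walk.support_nil, List.nodup_cons, List.mem_singleton,
      List.nodup_singleton, and_true]
    refine ⟨fun h => rv_ne_succ hn 0 h.symm, by simp, List.nodup_nil⟩
  have hpath2 : P2.IsPath := by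
    rw [SimpleGraph.Walk.isPath_def, hP2, SimpleGraph.Walk.support_copy, hsupp]
    exact chain_nodup hn (by omega) 1
  obtain ⟨q, -, huniq⟩ := (SimpleGraph.isTree_iff_existsUnique_path.mp ht).2
    (rv ((0:ZMod n) + 1)) (rv (0 : ZMod n))
  have heq : P1 = P2 := (huniq P1 hpath1).trans (huniq P2 hpath2).symm
  have := congrArg SimpleGraph.Walk.length heq
  rw [hP1, hP2] at this
  simp [hlen] at this
  omega

variable {F : Set (Sym2 (Fin (n + 1)))}

lemma all_rim_of_chain {j : ZMod n}
    (hchain : ∀ m : ℕ, m < n → rP F (j + (m : ZMod n))) : ∀ i, rP F i := by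
  intro i
  have h : i = j + (((i - j).val : ℕ) : ZMod n) := by rw [ZMod.natCast_zmod_val]; ring
  rw [h]
  exact hchain _ (ZMod.val_lt _)

lemma run_reaches_spoke (hn : 3 ≤ n) (hsub : F ⊆ (wheelGraph n).edgeSet)
    (ht : (SimpleGraph.fromEdgeSet F).IsTree) (j0 : ZMod n) (hgap : ¬ rP F (j0 - 1)) :
    σP F j0 := by
  by_contra hns
  set A : Set (Fin (n + 1)) := {v | ∃ m : ℕ, m < n ∧
    (∀ m' : ℕ, m' < m → rP F (j0 + (m' : ZMod n))) ∧ v = rv (j0 + (m : ZMod n))} with hA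
  have h0A : (0 : Fin (n + 1)) ∉ A := by
    rintro ⟨m, -, -, h⟩
    exact rv_ne_zero _ h.symm
  have hj0A : rv j0 ∈ A := by
    refine ⟨0, by omega, fun m' hm' => absurd hm' (Nat.not_lt_zero _), by norm_num⟩
  obtain ⟨w⟩ : Nonempty ((SimpleGraph.fromEdgeSet F).Walk (rv j0) 0) :=
    ht.isConnected.preconnected (rv j0) 0
  obtain ⟨d, -, hfst, hsnd⟩ := w.exists_boundary_dart A hj0A h0A
  obtain ⟨m, hmn, hchain, hfst'⟩ := hfst
  have hadj := d.adj
  rw [SimpleGraph.fromEdgeSet_adj] at hadj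
  obtain ⟨heF, hne⟩ := hadj
  rcases edge_char hn (hsub heF) with ⟨q, hq⟩ | ⟨q, hq⟩
  · rw [Sym2.eq_iff] at hq
    rcases hq with ⟨h1, h2⟩ | ⟨h1, h2⟩
    · exact rv_ne_zero _ (hfst'.symm.trans h1)
    · have hq' : q = j0 + (m : ZMod n) := rv_injective (h1.symm.trans hfst')
      have hsp : sP F (j0 + (m : ZMod n)) := by
        rw [sP, ← hq']
        rw [show s((0 : Fin (n+1)), rv q) = s(rv q, (0 : Fin (n+1))) from Sym2.eq_swap]
        rw [← h1, ← h2]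
        exact heF
      exact hns ⟨m, hmn, hchain, hsp⟩
  · have hrq : rP F q := by rw [rP, ← hq]; exact heF
    rw [Sym2.eq_iff] at hq
    rcases hq with ⟨h1, h2⟩ | ⟨h1, h2⟩
    · have hq' : q = j0 + (m : ZMod n) := rv_injective (h1.symm.trans hfst')
      by_cases hm1 : m + 1 < n
      · apply hsnd
        refine ⟨m + 1, hm1, ?_, ?_⟩
        · intro m' hm'
          rcases Nat.lt_or_ge m' m with h | h
          · exact hchain m' h
          · have : m' = m := by omega
            subst this
            exact hq' ▸ hrq
        · rw [h2, hq']
          congr 1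
          push_cast; ring
      · have hmval : m = n - 1 := by omega
        apply hgap
        have : j0 - 1 = q := by
          rw [hq', hmval]
          push_cast [Nat.cast_sub (by omega : 1 ≤ n)]
          simp [ZMod.natCast_self]
          ring
        rw [← this] at hrq
        exact hrq
    · -- d.fst = rv (q+1), d.snd = rv q
      have hq' : q + 1 = j0 + (m : ZMod n) := rv_injective (h1.symm.trans hfst')
      by_cases hm0 : m = 0
      · subst hm0
        apply hgap
        have : j0 - 1 = q := by
          have : (((0:ℕ) : ZMod n)) = 0 := by norm_num
          rw [this] at hq'
          linear_combination - hq'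
        rw [← this] at hrq
        exact hrq
      · apply hsnd
        refine ⟨m - 1, by omega, fun m' hm' => hchain m' (by omega), ?_⟩
        rw [h2]
        congr 1
        have : ((m - 1 : ℕ) : ZMod n) = (m : ZMod n) - 1 := by
          push_cast [Nat.cast_sub (by omega : 1 ≤ m)]
          ring
        rw [this]
        linear_combination hq'

lemma sigma_of_spoke {j : ZMod n} (hs : sP F j) : σP F j :=
  ⟨0, Nat.pos_of_ne_zero (NeZero.ne n), fun m' hm' => absurd hm' (Nat.not_lt_zero _),
    by simpa using hs⟩

lemma rP_of_not_sigma (hn : 3 ≤ n) (hsub : F ⊆ (wheelGraph n).edgeSet)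
    (ht : (SimpleGraph.fromEdgeSet F).IsTree) {j : ZMod n} (h : ¬ σP F (j + 1)) :
    rP F j := by
  by_contra hr
  exact h (run_reaches_spoke hn hsub ht (j + 1) (by simpa using hr))

lemma chain_prepend {j : ZMod n} {k : ℕ} (hr : rP F j)
    (hchain : ∀ m : ℕ, m < k → rP F ((j + 1) + (m : ZMod n))) :
    ∀ m : ℕ, m < k + 1 → rP F (j + (m : ZMod n)) := by
  intro m hm
  cases m with
  | zero => simpa using hr
  | succ m' =>
    rw [show j + ((m' + 1 : ℕ) : ZMod n) = (j + 1) + (m' : ZMod n) by push_cast; ring]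
    exact hchain m' (by omega)

lemma not_rP_of (hn : 3 ≤ n) (ht : (SimpleGraph.fromEdgeSet F).IsTree) {j : ZMod n}
    (h1 : ¬ σP F j) (h2 : σP F (j + 1)) : ¬ rP F j := by
  intro hr
  obtain ⟨k, hkn, hchain, hs⟩ := h2
  have hch' := chain_prepend hr hchain
  by_cases hk1 : k + 1 < n
  · refine h1 ⟨k + 1, hk1, hch', ?_⟩
    rw [show j + ((k + 1 : ℕ) : ZMod n) = (j + 1) + (k : ZMod n) by push_cast; ring]
    exact hs
  · have hkn' : k + 1 = n := by omega
    exact not_all_rim hn ht (all_rim_of_chain (fun m hm => hch' m (by omega)))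

lemma sP_iff (hn : 3 ≤ n) (hsub : F ⊆ (wheelGraph n).edgeSet)
    (ht : (SimpleGraph.fromEdgeSet F).IsTree) (j : ZMod n) :
    sP F j ↔ σP F j ∧ (¬ rP F j ∨ ¬ σP F (j + 1)) := by
  constructor
  · intro hs
    refine ⟨sigma_of_spoke hs, ?_⟩
    by_contra hc
    push_neg at hc
    obtain ⟨hr, hσ⟩ := hc
    obtain ⟨k, hkn, hchain, hs2⟩ := hσ
    have hch' := chain_prepend hr hchain
    by_cases hk1 : k + 1 < n
    · refine no_two_spokes hn ht j (k + 1) (by omega) hk1 hch' hs ?_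
      rw [show j + ((k + 1 : ℕ) : ZMod n) = (j + 1) + (k : ZMod n) by push_cast; ring]
      exact hs2
    · exact not_all_rim hn ht (all_rim_of_chain (fun m hm => hch' m (by omega)))
  · rintro ⟨⟨k, hkn, hchain, hs⟩, hor⟩
    cases k with
    | zero => simpa using hs
    | succ k' =>
      exfalso
      rcases hor with hr | hσ
      · exact hr (by simpa using hchain 0 (by omega))
      · refine hσ ⟨k', by omega, ?_, ?_⟩
        · intro m hm
          rw [show (j + 1) + (m : ZMod n) = j + ((m + 1 : ℕ) : ZMod n) by push_cast; ring]
          exact hchain (m + 1) (by omega)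
        · rw [show (j + 1) + (k' : ZMod n) = j + ((k' + 1 : ℕ) : ZMod n) by push_cast; ring]
          exact hs

lemma spoke_exists (hn : 3 ≤ n) (hsub : F ⊆ (wheelGraph n).edgeSet)
    (ht : (SimpleGraph.fromEdgeSet F).IsTree) : ∃ j, sP F j := by
  obtain ⟨w⟩ : Nonempty ((SimpleGraph.fromEdgeSet F).Walk 0 (rv 0)) :=
    ht.isConnected.preconnected 0 (rv 0)
  obtain ⟨d, -, hfst, hsnd⟩ := w.exists_boundary_dart {0} rfl (rv_ne_zero 0)
  have hfst' : d.fst = 0 := hfst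
  have hadj := d.adj
  rw [SimpleGraph.fromEdgeSet_adj] at hadj
  obtain ⟨heF, hne⟩ := hadj
  rcases edge_char hn (hsub heF) with ⟨q, hq⟩ | ⟨q, hq⟩
  · rw [Sym2.eq_iff] at hq
    rcases hq with ⟨h1, h2⟩ | ⟨h1, h2⟩
    · refine ⟨q, ?_⟩
      rw [sP, ← h1, ← h2]
      exact heF
    · exact absurd (hfst' ▸ h1 : (0 : Fin (n+1)) = rv q).symm (rv_ne_zero q)
  · rw [Sym2.eq_iff] at hq
    rcases hq with ⟨h1, h2⟩ | ⟨h1, h2⟩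
    · exact absurd (hfst' ▸ h1 : (0 : Fin (n+1)) = rv q).symm (rv_ne_zero q)
    · exact absurd (hfst' ▸ h1 : (0 : Fin (n+1)) = rv (q+1)).symm (rv_ne_zero _)


end TreeSide

section OrientSide

def posn (v : Fin (n + 1)) : ZMod n := ((v.val - 1 : ℕ) : ZMod n)

lemma posn_rv (j : ZMod n) : posn (rv j) = j := by
  show (((j.val + 1) - 1 : ℕ) : ZMod n) = j
  simp [ZMod.natCast_zmod_val]

/-- Rank function on the wheel's vertices built from hub/rim pattern `σ` and rim ranks `x`. -/
def rankF (σ : ZMod n → Bool) (x : ZMod n → ℤ) : Fin (n + 1) → ℤ :=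
  fun v => if v = 0 then 0 else (if σ (posn v) then (3 * n + 1 : ℤ) else -(3 * n + 1)) + x (posn v)

lemma rankF_zero (σ : ZMod n → Bool) (x : ZMod n → ℤ) : rankF σ x 0 = 0 := if_pos rfl

lemma rankF_rv (σ : ZMod n → Bool) (x : ZMod n → ℤ) (j : ZMod n) :
    rankF σ x (rv j) = (if σ j then (3 * n + 1 : ℤ) else -(3 * n + 1)) + x j := by
  rw [rankF, if_neg (rv_ne_zero j), posn_rv]

/-- The orientation induced by a rank function. -/
def orientR (R : Fin (n + 1) → ℤ) : Fin (n + 1) → Fin (n + 1) → Prop :=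
  fun a b => (wheelGraph n).Adj a b ∧ R a < R b

section Ranked

variable {σ δ : ZMod n → Bool} {x : ZMod n → ℤ}

variable (hx : ∀ j, |x j| ≤ 3 * n)
  (hstrict : ∀ j, (δ j = true → x j < x (j + 1)) ∧ (δ j = false → x (j + 1) < x j))
  (hcross : ∀ j : ZMod n, σ j ≠ σ (j + 1) → δ j = σ (j + 1))

include hx in
lemma rank_hub_lt_iff (j : ZMod n) : (0 : ℤ) < rankF σ x (rv j) ↔ σ j = true := by
  rw [rankF_rv]
  have hb := hx j
  rw [abs_le] at hb
  cases h : σ j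
  · simp only [Bool.false_eq_true, if_false]
    constructor
    · intro h2; exfalso; omega
    · intro h2; exact absurd h2 (by simp)
  · simp only [if_true]
    exact ⟨fun _ => trivial, fun _ => by omega⟩

include hx hstrict hcross in
lemma rank_rim_lt_iff (j : ZMod n) :
    rankF σ x (rv j) < rankF σ x (rv (j + 1)) ↔ δ j = true := by
  rw [rankF_rv, rankF_rv]
  have hb1 := hx j; have hb2 := hx (j + 1)
  rw [abs_le] at hb1 hb2
  by_cases hσ : σ j = σ (j + 1)
  · rw [hσ, add_lt_add_iff_left]
    constructor
    · intro hlt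
      by_contra hne
      have := (hstrict j).2 (by simpa using hne)
      omega
    · exact (hstrict j).1
  · have hδ := hcross j hσ
    cases h2 : σ (j + 1)
    · have h1 : σ j = true := by
        cases hh : σ j
        · rw [hh, h2] at hσ; exact absurd rfl hσ
        · rfl
      rw [h1, hδ.trans h2]
      simp only [if_true, Bool.false_eq_true, if_false]
      constructor
      · intro h3; exfalso; omega
      · intro h3; exact absurd h3 (by simp)
    · have h1 : σ j = false := by
        cases hh : σ j
        · rfl
        · rw [hh, h2] at hσ; exact absurd rfl hσ
      rw [h1]
      simp only [Bool.false_eq_true, if_false, if_true]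
      exact ⟨fun _ => hδ.trans h2, fun _ => by omega⟩

include hx hstrict hcross in
lemma rank_rim_gt_iff (j : ZMod n) :
    rankF σ x (rv (j + 1)) < rankF σ x (rv j) ↔ δ j = false := by
  rw [rankF_rv, rankF_rv]
  have hb1 := hx j; have hb2 := hx (j + 1)
  rw [abs_le] at hb1 hb2
  by_cases hσ : σ j = σ (j + 1)
  · rw [hσ, add_lt_add_iff_left]
    constructor
    · intro hlt
      by_contra hne
      have := (hstrict j).1 (by simpa using hne)
      omega
    · exact (hstrict j).2
  · have hδ := hcross j hσ
    cases h2 : σ (j + 1)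
    · have h1 : σ j = true := by
        cases hh : σ j
        · rw [hh, h2] at hσ; exact absurd rfl hσ
        · rfl
      rw [h1]
      simp only [if_true, Bool.false_eq_true, if_false]
      exact ⟨fun _ => hδ.trans h2, fun _ => by omega⟩
    · have h1 : σ j = false := by
        cases hh : σ j
        · rfl
        · rw [hh, h2] at hσ; exact absurd rfl hσ
      rw [h1, hδ.trans h2]
      simp only [Bool.false_eq_true, if_false, if_true]
      constructor
      · intro h3; exfalso; omega
      · intro h3; exact absurd h3 (by simp)

include hx hstrict hcross in
lemma rank_ne_adj (hn : 3 ≤ n) :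
    ∀ a b : Fin (n + 1), (wheelGraph n).Adj a b → rankF σ x a ≠ rankF σ x b := by
  have rim_ne : ∀ j : ZMod n, rankF σ x (rv j) ≠ rankF σ x (rv (j + 1)) := by
    intro j
    cases hδ : δ j
    · have := (rank_rim_gt_iff hx hstrict hcross j).mpr hδ
      omega
    · have := (rank_rim_lt_iff hx hstrict hcross j).mpr hδ
      omega
  have hub_ne : ∀ j : ZMod n, rankF σ x (0 : Fin (n+1)) ≠ rankF σ x (rv j) := by
    intro j
    rw [rankF_zero, rankF_rv]
    have hb := hx j
    rw [abs_le] at hb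
    cases h : σ j
    · simp only [Bool.false_eq_true, if_false]; omega
    · simp only [if_true]; omega
  intro a b hadj
  rcases adj_char hn hadj with h | h | ⟨j, ⟨h1, h2⟩ | ⟨h1, h2⟩⟩
  · subst h
    obtain ⟨q, hq⟩ := exists_rv b (fun hb => hadj.ne hb.symm)
    rw [hq]
    exact hub_ne q
  · subst h
    obtain ⟨q, hq⟩ := exists_rv a (fun ha => hadj.ne ha)
    rw [hq]
    exact (hub_ne q).symm
  · rw [h1, h2]; exact rim_ne j
  · rw [h1, h2]; exact (rim_ne j).symm

include hx hstrict hcross in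
lemma orientR_mem (hn : 3 ≤ n) :
    orientR (rankF σ x) ∈ acyclicOrientationSet (wheelGraph n) := by
  have hne := rank_ne_adj hx hstrict hcross hn
  refine ⟨fun a b h => h.1, ?_, ?_⟩
  · intro a b hadj
    constructor
    · rintro ⟨-, hlt⟩ ⟨-, hlt'⟩
      omega
    · intro hno
      refine ⟨hadj, ?_⟩
      have h1 : ¬ (rankF σ x b < rankF σ x a) := fun hlt => hno ⟨hadj.symm, hlt⟩
      have h2 := hne a b hadj
      omega
  · intro a ha
    have key : ∀ u v : Fin (n + 1), Relation.TransGen (orientR (rankF σ x)) u v →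
        rankF σ x u < rankF σ x v := by
      intro u v h
      induction h with
      | single h => exact h.2
      | tail _ h ih => exact ih.trans h.2
    exact absurd (key a a ha) (lt_irrefl _)

end Ranked

end OrientSide

noncomputable section Params
open scoped Classical

def δfull (σ ρ : ZMod n → Bool) : ZMod n → Bool :=
  fun j => if σ j = σ (j + 1) then ρ j else σ (j + 1)

lemma δfull_cross (σ ρ : ZMod n → Bool) (j : ZMod n) (h : σ j ≠ σ (j + 1)) :
    δfull σ ρ j = σ (j + 1) := if_neg h

lemma δfull_same (σ ρ : ZMod n → Bool) (j : ZMod n) (h : σ j = σ (j + 1)) :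
    δfull σ ρ j = ρ j := if_pos h

def xChoice (hn : 3 ≤ n) (δ : ZMod n → Bool) : ZMod n → ℤ :=
  if h : (∃ a, δ a = true) ∧ (∃ b, δ b = false) then
    Classical.choose (realize hn δ h.1 h.2) else 0

lemma xChoice_spec (hn : 3 ≤ n) (δ : ZMod n → Bool)
    (h1 : ∃ a, δ a = true) (h0 : ∃ b, δ b = false) :
    (∀ j, |xChoice hn δ j| ≤ 3 * n) ∧
      ∀ j, (δ j = true → xChoice hn δ j < xChoice hn δ (j + 1)) ∧
        (δ j = false → xChoice hn δ (j + 1) < xChoice hn δ j) := by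
  rw [xChoice, dif_pos (⟨h1, h0⟩ : (∃ a, δ a = true) ∧ (∃ b, δ b = false))]
  exact Classical.choose_spec (realize hn δ h1 h0)

def orientP (hn : 3 ≤ n) (σ ρ : ZMod n → Bool) : Fin (n + 1) → Fin (n + 1) → Prop :=
  orientR (rankF σ (xChoice hn (δfull σ ρ)))

lemma orientP_apply (hn : 3 ≤ n) (σ ρ : ZMod n → Bool) (a b : Fin (n + 1)) :
    orientP hn σ ρ a b ↔ (wheelGraph n).Adj a b ∧
      rankF σ (xChoice hn (δfull σ ρ)) a < rankF σ (xChoice hn (δfull σ ρ)) b := Iff.rfl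

lemma orientP_mem (hn : 3 ≤ n) (σ ρ : ZMod n → Bool)
    (hnc : (∃ j, δfull σ ρ j = true) ∧ ∃ j, δfull σ ρ j = false) :
    orientP hn σ ρ ∈ acyclicOrientationSet (wheelGraph n) := by
  obtain ⟨hx, hstrict⟩ := xChoice_spec hn (δfull σ ρ) hnc.1 hnc.2
  exact orientR_mem hx hstrict (fun j h => δfull_cross σ ρ j h) hn

lemma orientP_hub (hn : 3 ≤ n) (σ ρ : ZMod n → Bool)
    (hnc : (∃ j, δfull σ ρ j = true) ∧ ∃ j, δfull σ ρ j = false) (j : ZMod n) :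
    orientP hn σ ρ 0 (rv j) ↔ σ j = true := by
  obtain ⟨hx, hstrict⟩ := xChoice_spec hn (δfull σ ρ) hnc.1 hnc.2
  rw [orientP_apply]
  constructor
  · rintro ⟨-, hlt⟩
    rw [rankF_zero] at hlt
    exact (rank_hub_lt_iff hx j).mp hlt
  · intro h
    refine ⟨adj_hub j, ?_⟩
    rw [rankF_zero]
    exact (rank_hub_lt_iff hx j).mpr h

lemma orientP_rim (hn : 3 ≤ n) (σ ρ : ZMod n → Bool)
    (hnc : (∃ j, δfull σ ρ j = true) ∧ ∃ j, δfull σ ρ j = false) (j : ZMod n) :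
    orientP hn σ ρ (rv j) (rv (j + 1)) ↔ δfull σ ρ j = true := by
  obtain ⟨hx, hstrict⟩ := xChoice_spec hn (δfull σ ρ) hnc.1 hnc.2
  rw [orientP_apply]
  constructor
  · rintro ⟨-, hlt⟩
    exact (rank_rim_lt_iff hx hstrict (fun i h => δfull_cross σ ρ i h) j).mp hlt
  · intro h
    exact ⟨adj_rim hn j, (rank_rim_lt_iff hx hstrict (fun i h => δfull_cross σ ρ i h) j).mpr h⟩

/-- Boolean versions of the tree data. -/
def σb (F : Set (Sym2 (Fin (n + 1)))) : ZMod n → Bool := fun j => decide (σP F j)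
def rb (F : Set (Sym2 (Fin (n + 1)))) : ZMod n → Bool := fun j => decide (rP F j)

def starSet : Set (Sym2 (Fin (n + 1))) := {e | ∃ j : ZMod n, e = s(0, rv j)}

def Phi (hn : 3 ≤ n) (F : Set (Sym2 (Fin (n + 1)))) : Fin (n + 1) → Fin (n + 1) → Prop :=
  if F = starSet then orientP hn (fun _ => false) (fun j => decide (j = 0))
  else orientP hn (σb F) (rb F)

lemma star_nc (hn : 3 ≤ n) :
    (∃ j, δfull (fun _ => false) (fun j : ZMod n => decide (j = 0)) j = true) ∧
      ∃ j, δfull (fun _ => false) (fun j : ZMod n => decide (j = 0)) j = false := by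
  constructor
  · exact ⟨0, by rw [δfull_same _ _ _ rfl]; simp⟩
  · exact ⟨1, by rw [δfull_same _ _ _ rfl]; simp [one_lt_cases hn]⟩

lemma bool_eq_of_iff {a b : Bool} (h : a = true ↔ b = true) : a = b := by
  cases a <;> cases b <;> simp_all

section TreeNC

variable {F : Set (Sym2 (Fin (n + 1)))}

lemma tree_nc (hn : 3 ≤ n) (hsub : F ⊆ (wheelGraph n).edgeSet)
    (ht : (SimpleGraph.fromEdgeSet F).IsTree) (hstar : F ≠ starSet) :
    (∃ j, δfull (σb F) (rb F) j = true) ∧ ∃ j, δfull (σb F) (rb F) j = false := by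
  by_cases hall : ∀ j, σb F j = true
  · have hsame : ∀ j : ZMod n, σb F j = σb F (j + 1) := fun j => (hall j).trans (hall _).symm
    have hδr : ∀ j, δfull (σb F) (rb F) j = rb F j := fun j => δfull_same _ _ _ (hsame j)
    constructor
    · by_contra hno
      push_neg at hno
      have hrF : ∀ j, ¬ rP F j := by
        intro j hr
        exact (hno j) (by rw [hδr j, rb]; simpa using hr)
      have hsF : ∀ j, sP F j := by
        intro j
        have hσ : σP F j := by
          have := hall j
          simp only [σb, decide_eq_true_eq] at this
          exact this
        exact (sP_iff hn hsub ht j).mpr ⟨hσ, Or.inl (hrF j)⟩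
      apply hstar
      ext e
      constructor
      · intro he
        rcases edge_char hn (hsub he) with ⟨j, hj⟩ | ⟨j, hj⟩
        · exact ⟨j, hj⟩
        · exact absurd (by rw [rP, ← hj]; exact he : rP F j) (hrF j)
      · rintro ⟨j, hj⟩
        rw [hj]
        exact hsF j
    · have h := not_all_rim hn ht
      push_neg at h
      obtain ⟨j, hj⟩ := h
      exact ⟨j, by rw [hδr j, rb]; simpa using hj⟩
  · push_neg at hall
    obtain ⟨j₀, hj₀⟩ := hall
    have hfalse : ∃ j, σb F j = false := ⟨j₀, by simpa using hj₀⟩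
    obtain ⟨js, hjs⟩ := spoke_exists hn hsub ht
    have htrue : ∃ j, σb F j = true :=
      ⟨js, by simp only [σb, decide_eq_true_eq]; exact sigma_of_spoke hjs⟩
    constructor
    · obtain ⟨j, h1, h2⟩ := exists_transition (fun j => !(σb F j))
        (by obtain ⟨a, ha⟩ := hfalse; exact ⟨a, by simp [ha]⟩)
        (by obtain ⟨a, ha⟩ := htrue; exact ⟨a, by simp [ha]⟩)
      have h1' : σb F j = false := by simpa using h1
      have h2' : σb F (j + 1) = true := by simpa using h2
      refine ⟨j, ?_⟩
      rw [δfull_cross _ _ _ (by rw [h1', h2']; simp), h2']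
    · obtain ⟨j, h1, h2⟩ := exists_transition (σb F) htrue hfalse
      refine ⟨j, ?_⟩
      rw [δfull_cross _ _ _ (by rw [h1, h2]; simp), h2]

end TreeNC

lemma phi_inj (hn : 3 ≤ n) {F G : Set (Sym2 (Fin (n + 1)))}
    (hsubF : F ⊆ (wheelGraph n).edgeSet) (htF : (SimpleGraph.fromEdgeSet F).IsTree)
    (hsubG : G ⊆ (wheelGraph n).edgeSet) (htG : (SimpleGraph.fromEdgeSet G).IsTree)
    (h : Phi hn F = Phi hn G) : F = G := by
  by_cases hsF : F = starSet <;> by_cases hsG : G = starSet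
  · rw [hsF, hsG]
  · exfalso
    rw [Phi, if_pos hsF, Phi, if_neg hsG] at h
    obtain ⟨js, hjs⟩ := spoke_exists hn hsubG htG
    have h1 := orientP_hub hn (fun _ => false) (fun j : ZMod n => decide (j = 0))
      (star_nc hn) js
    have h2 := orientP_hub hn (σb G) (rb G) (tree_nc hn hsubG htG hsG) js
    rw [h] at h1
    have := h1.symm.trans h2
    simp only [σb, decide_eq_true_eq] at this
    exact absurd (this.mpr (sigma_of_spoke hjs)) (by simp)
  · exfalso
    rw [Phi, if_neg hsF, Phi, if_pos hsG] at h
    obtain ⟨js, hjs⟩ := spoke_exists hn hsubF htF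
    have h1 := orientP_hub hn (fun _ => false) (fun j : ZMod n => decide (j = 0))
      (star_nc hn) js
    have h2 := orientP_hub hn (σb F) (rb F) (tree_nc hn hsubF htF hsF) js
    rw [← h] at h1
    have := h1.symm.trans h2
    simp only [σb, decide_eq_true_eq] at this
    exact absurd (this.mpr (sigma_of_spoke hjs)) (by simp)
  · rw [Phi, if_neg hsF, Phi, if_neg hsG] at h
    have ncF := tree_nc hn hsubF htF hsF
    have ncG := tree_nc hn hsubG htG hsG
    have hσ : σb F = σb G := by
      funext j
      apply bool_eq_of_iff
      have h1 := orientP_hub hn (σb F) (rb F) ncF j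
      have h2 := orientP_hub hn (σb G) (rb G) ncG j
      rw [h] at h1
      exact h1.symm.trans h2
    have hσ' : ∀ i, σP F i ↔ σP G i := fun i => decide_eq_decide.mp (congrFun hσ i)
    have hδ : ∀ j, δfull (σb F) (rb F) j = δfull (σb G) (rb G) j := by
      intro j
      apply bool_eq_of_iff
      have h1 := orientP_rim hn (σb F) (rb F) ncF j
      have h2 := orientP_rim hn (σb G) (rb G) ncG j
      rw [h] at h1
      exact h1.symm.trans h2
    have hr : ∀ j, rP F j ↔ rP G j := by
      intro j
      by_cases hsame : σb F j = σb F (j + 1)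
      · have e1 : δfull (σb F) (rb F) j = rb F j := δfull_same _ _ _ hsame
        have e2 : δfull (σb G) (rb G) j = rb G j :=
          δfull_same _ _ _ (by rw [← hσ]; exact hsame)
        have : rb F j = rb G j := by rw [← e1, ← e2, hδ j]
        exact decide_eq_decide.mp this
      · cases h1 : σb F j <;> cases h2 : σb F (j + 1)
        · rw [h1, h2] at hsame; exact absurd rfl hsame
        · -- σ j false, σ (j+1) true : no rim edge on either side
          have hnF : ¬ rP F j := by
            apply not_rP_of hn htF
            · intro hσP
              have hcon : σb F j = true := by simp only [σb, decide_eq_true_eq]; exact hσP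
              rw [h1] at hcon
              exact absurd hcon (by simp)
            · have h2' := h2
              simp only [σb, decide_eq_true_eq] at h2'
              exact h2'
          have hnG : ¬ rP G j := by
            apply not_rP_of hn htG
            · intro hσP
              have hcon : σb G j = true := by simp only [σb, decide_eq_true_eq]; exact hσP
              rw [← hσ, h1] at hcon
              exact absurd hcon (by simp)
            · have h2' : σb G (j + 1) = true := by rw [← hσ]; exact h2
              simp only [σb, decide_eq_true_eq] at h2'
              exact h2'
          exact iff_of_false hnF hnG
        · -- σ j true, σ (j+1) false : rim edge present on both sides
          have hF : rP F j := by
            apply rP_of_not_sigma hn hsubF htF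
            intro hσP
            have : σb F (j + 1) = true := by simp only [σb, decide_eq_true_eq]; exact hσP
            rw [h2] at this
            exact absurd this (by simp)
          have hG : rP G j := by
            apply rP_of_not_sigma hn hsubG htG
            intro hσP
            have : σb G (j + 1) = true := by simp only [σb, decide_eq_true_eq]; exact hσP
            rw [← hσ, h2] at this
            exact absurd this (by simp)
          exact iff_of_true hF hG
        · rw [h1, h2] at hsame; exact absurd rfl hsame
    have hs : ∀ j, sP F j ↔ sP G j := by
      intro j
      rw [sP_iff hn hsubF htF j, sP_iff hn hsubG htG j, hσ' j, hσ' (j + 1), hr j]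
    ext e
    constructor
    · intro he
      rcases edge_char hn (hsubF he) with ⟨j, hj⟩ | ⟨j, hj⟩
      · rw [hj]
        exact (hs j).mp (by rw [sP, ← hj]; exact he)
      · rw [hj]
        exact (hr j).mp (by rw [rP, ← hj]; exact he)
    · intro he
      rcases edge_char hn (hsubG he) with ⟨j, hj⟩ | ⟨j, hj⟩
      · rw [hj]
        exact (hs j).mpr (by rw [sP, ← hj]; exact he)
      · rw [hj]
        exact (hr j).mpr (by rw [rP, ← hj]; exact he)

end Params
end WheelAux

/-- For `n ≥ 3`, the wheel graph `W_n` has at least as many acyclic orientations as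
spanning trees. -/
theorem card_spanningTrees_le_card_acyclicOrientations_wheelGraph (n : ℕ) (hn : 3 ≤ n) :
    (spanningTreeSet (wheelGraph n)).ncard ≤
      (acyclicOrientationSet (wheelGraph n)).ncard := by
  haveI : NeZero n := ⟨by omega⟩
  apply Set.ncard_le_ncard_of_injOn (WheelAux.Phi hn)
  · rintro F ⟨hsub, ht⟩
    rw [WheelAux.Phi]
    split_ifs with hstar
    · exact WheelAux.orientP_mem hn _ _ (WheelAux.star_nc hn)
    · exact WheelAux.orientP_mem hn _ _ (WheelAux.tree_nc hn hsub ht hstar)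
  · rintro F ⟨hsubF, htF⟩ G ⟨hsubG, htG⟩ hFG
    exact WheelAux.phi_inj hn hsubF htF hsubG htG hFG
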